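/- Let L ⊣ R : D ⇄ C be an adjunction with D cartesian, W an object of D, and V_f an object of D/W. If the unit η^W of the sliced adjunction L_W ⊣ R_W at the object W*V = (π₁ : W×V → W) is an isomorphism, then the unit η^W at V_f is a split monomorphism in D: the composite W ×_{RLW} RLV → W ×_{RLW} RL(W×V) → V, where the first map is id_W × RL(f,id_V) over RLW and the second is obtained from the inverse of (π₁, η_{W×V}) : W×V → W ×_{RLW} RL(W×V), splits the map (f, η_V) : V → W ×_{RLW} RLV. -/

import Mathlib

open CategoryTheory Limits

/-- Let `L ⊣ R : D ⇄ C` be an adjunction with `D` cartesian, `W` an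
object of `D` and `f : V ⟶ W` an object `V_f` of `D/W`.  The unit of the sliced
adjunction at `V_f` is the map `(f, η_V) : V ⟶ W ×_{RLW} RLV`, and at
`W*V = (π₁ : W ⨯ V ⟶ W)` it is `(π₁, η_{W⨯V}) : W ⨯ V ⟶ W ×_{RLW} RL(W ⨯ V)`.
If the latter is an isomorphism (with inverse `j`), then `(f, η_V)` is a split
monomorphism in `D`, split by the composite
`W ×_{RLW} RLV → W ×_{RLW} RL(W ⨯ V) → W ⨯ V → V`, where the first map is
`id_W ×_{RLW} RL(f, id_V)`, the second is `j`, and the third is `π₂`. -/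
theorem stmt5 {D C : Type*} [Category D] [Category C] [HasFiniteLimits D]
    (L : D ⥤ C) (R : C ⥤ D) (adj : L ⊣ R) (W V : D) (f : V ⟶ W)
    (j : pullback (R.map (L.map (prod.fst : W ⨯ V ⟶ W))) (adj.unit.app W) ⟶ W ⨯ V)
    (hj₁ : pullback.lift (adj.unit.app (W ⨯ V)) (prod.fst : W ⨯ V ⟶ W)
        (by simpa using (adj.unit.naturality (prod.fst : W ⨯ V ⟶ W)).symm) ≫ j = 𝟙 (W ⨯ V))
    (hj₂ : j ≫ pullback.lift (adj.unit.app (W ⨯ V)) (prod.fst : W ⨯ V ⟶ W)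
        (by simpa using (adj.unit.naturality (prod.fst : W ⨯ V ⟶ W)).symm) =
        𝟙 (pullback (R.map (L.map (prod.fst : W ⨯ V ⟶ W))) (adj.unit.app W))) :
    pullback.lift (adj.unit.app V) f (by simpa using (adj.unit.naturality f).symm) ≫
      (pullback.map (R.map (L.map f)) (adj.unit.app W)
          (R.map (L.map (prod.fst : W ⨯ V ⟶ W))) (adj.unit.app W)
          (R.map (L.map (prod.lift f (𝟙 V)))) (𝟙 W) (𝟙 (R.obj (L.obj W)))
          (by simp [← Functor.map_comp, prod.lift_fst]) (by simp) ≫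
        j ≫ (prod.snd : W ⨯ V ⟶ V)) = 𝟙 V := by
  have key : pullback.lift (adj.unit.app V) f
      (by simpa using (adj.unit.naturality f).symm) ≫
      pullback.map (R.map (L.map f)) (adj.unit.app W)
          (R.map (L.map (prod.fst : W ⨯ V ⟶ W))) (adj.unit.app W)
          (R.map (L.map (prod.lift f (𝟙 V)))) (𝟙 W) (𝟙 (R.obj (L.obj W)))
          (by simp [← Functor.map_comp, prod.lift_fst]) (by simp) =
      prod.lift f (𝟙 V) ≫ pullback.lift (adj.unit.app (W ⨯ V)) (prod.fst : W ⨯ V ⟶ W)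
        (by simpa using (adj.unit.naturality (prod.fst : W ⨯ V ⟶ W)).symm) := by
    apply pullback.hom_ext <;>
      (simp only [pullback.map, Category.assoc, pullback.lift_fst, pullback.lift_fst_assoc, pullback.lift_snd, pullback.lift_snd_assoc]
       simp [← adj.unit.naturality (prod.lift f (𝟙 V)), prod.lift_fst])
  rw [← Category.assoc, key, Category.assoc, reassoc_of% hj₁]
  simp [prod.lift_snd]
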